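/- Let N be a locally finite point process on ℝ̄₀ with P(N(ℝ̄₀) = 0) = 0 and E[N(ℝ̄₀∖(−a,a))] < ∞ for some a > 0, and suppose the scaled Laplace functional of N is scale-uniquely supported on [g]_sc for some g : (0,∞) → (0,∞). Then inf_{y>0} g(y) = 0, sup_{y>0} g(y) = 1, and 0 < g(x) < 1 for every x ∈ (0,∞); in particular g attains neither its infimum nor its supremum. -/

import Mathlib

open MeasureTheory Filter Set
open scoped ENNReal Topology

/-- `expNeg z = exp(-z)` for `z ∈ [0,∞]`, with `expNeg ∞ = 0`. -/
noncomputable def expNeg (z : ℝ≥0∞) : ℝ := if z = ∞ then 0 else Real.exp (-z.toReal)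

/-- `f ∈ C_c^+(ℝ̄₀)`: a nonnegative function, continuous on `ℝ̄₀ = [-∞,∞] \ {0}`
(i.e. continuous on `ℝ` with finite limits at `±∞`), vanishing in a neighbourhood of `0`
(compact support in `ℝ̄₀` not containing `0`). -/
def IsCcPos (f : ℝ → ℝ) : Prop :=
  Continuous f ∧ (∀ x, 0 ≤ f x) ∧ (∃ ε > 0, ∀ x : ℝ, |x| < ε → f x = 0) ∧
  (∃ L : ℝ, Tendsto f atTop (𝓝 L)) ∧ (∃ L : ℝ, Tendsto f atBot (𝓝 L))

/-- A locally finite point process on `ℝ̄₀`: a measurable family of purely atomic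
`ℕ ∪ {∞}`-valued measures on `ℝ \ {0}`, a.s. finite on sets bounded away from `0`. -/
def IsPointProcess {Ω : Type*} [MeasurableSpace Ω] (μ : Measure Ω) (N : Ω → Measure ℝ) : Prop :=
  Measurable N ∧
  (∀ᵐ ω ∂μ, (N ω) {0} = 0) ∧
  (∀ᵐ ω ∂μ, ∀ b : ℝ, 0 < b → (N ω) {x : ℝ | b ≤ |x|} < ∞) ∧
  (∀ᵐ ω ∂μ, ∀ B : Set ℝ, MeasurableSet B → (N ω) B ∈ Set.range ((↑) : ℕ → ℝ≥0∞) ∪ {∞})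

/-- The scaled Laplace functional `Ψ_N(f‖y) = E[exp(-∫ f(x/y) N(dx))]`. -/
noncomputable def SLF {Ω : Type*} [MeasurableSpace Ω] (μ : Measure Ω) (N : Ω → Measure ℝ)
    (f : ℝ → ℝ) (y : ℝ) : ℝ :=
  ∫ ω, expNeg (∫⁻ x, ENNReal.ofReal (f (x / y)) ∂(N ω)) ∂μ

/-- The scaled Laplace functional of `N` is scale-uniquely supported on `[g]_sc`:
for every `f ∈ C_c^+(ℝ̄₀)` there is `c_f > 0` with `Ψ_N(f‖y) = g(c_f · y)` for all `y > 0`. -/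
def ScaleUniqSupp {Ω : Type*} [MeasurableSpace Ω] (μ : Measure Ω) (N : Ω → Measure ℝ)
    (g : ℝ → ℝ) : Prop :=
  ∀ f : ℝ → ℝ, IsCcPos f → ∃ c > 0, ∀ y > 0, SLF μ N f y = g (c * y)

/-! ### Auxiliary lemmas about `expNeg` -/

lemma expNeg_nonneg (z : ℝ≥0∞) : 0 ≤ expNeg z := by
  unfold expNeg; split
  · exact le_refl 0
  · exact (Real.exp_pos _).le

lemma expNeg_le_one (z : ℝ≥0∞) : expNeg z ≤ 1 := by
  unfold expNeg; split
  · exact zero_le_one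
  · exact Real.exp_le_one_iff.2 (neg_nonpos.2 ENNReal.toReal_nonneg)

lemma expNeg_zero : expNeg 0 = 1 := by simp [expNeg]

lemma expNeg_anti {z w : ℝ≥0∞} (h : z ≤ w) : expNeg w ≤ expNeg z := by
  unfold expNeg
  by_cases hw : w = ∞
  · simp only [hw, if_true]
    split
    · exact le_refl 0
    · exact (Real.exp_pos _).le
  · have hz : z ≠ ∞ := fun hz => hw (top_le_iff.1 (hz ▸ h))
    simp only [hw, hz, if_false]
    exact Real.exp_le_exp.2 (neg_le_neg (ENNReal.toReal_mono hw h))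

lemma expNeg_eq_one_iff {z : ℝ≥0∞} : expNeg z = 1 ↔ z = 0 := by
  constructor
  · intro h
    unfold expNeg at h
    by_cases hz : z = ∞
    · simp [hz] at h
    · simp only [hz, if_false] at h
      have := (Real.exp_eq_one_iff _).1 h
      have hz0 : z.toReal = 0 := by linarith [neg_eq_zero.1 this]
      exact (ENNReal.toReal_eq_zero_iff z).1 hz0 |>.resolve_right hz
  · rintro rfl; exact expNeg_zero

lemma measurable_expNeg : Measurable expNeg := by
  unfold expNeg
  exact Measurable.ite (measurableSet_singleton ∞) measurable_const
    (Real.measurable_exp.comp ENNReal.measurable_toReal.neg)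

lemma expNeg_natCast (n : ℕ) : expNeg (n : ℝ≥0∞) = Real.exp (-(n : ℝ)) := by
  simp [expNeg]

lemma expNeg_add_right_cancel {a b : ℝ≥0∞} (hb : b ≠ ∞) (h : expNeg (a + b) = expNeg b) :
    a = 0 := by
  by_cases ha : a + b = ∞
  · exfalso
    rw [expNeg, if_pos ha, expNeg, if_neg hb] at h
    exact (Real.exp_pos _).ne' h.symm
  · have ha' : a ≠ ∞ := fun h' => ha (by simp [h'])
    rw [expNeg, if_neg ha, expNeg, if_neg hb] at h
    have h2 : -(a + b).toReal = -b.toReal := Real.exp_injective h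
    have h3 : (a + b).toReal = b.toReal := by linarith
    rw [ENNReal.toReal_add ha' hb] at h3
    have : a.toReal = 0 := by linarith
    exact ((ENNReal.toReal_eq_zero_iff a).1 this).resolve_right ha'

/-! ### The set `Sb t = {x : t ≤ |x|}` -/

def Sb (t : ℝ) : Set ℝ := {x : ℝ | t ≤ |x|}

lemma measurableSet_Sb (t : ℝ) : MeasurableSet (Sb t) :=
  measurableSet_le measurable_const measurable_id.abs

/-! ### Test functions `f0`, `f1`, `f2` -/

noncomputable def f0 (u : ℝ) : ℝ := min 1 (max (2 * |u| - 1) 0)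

noncomputable def f1 (u : ℝ) : ℝ := max 0 (min (min (2 * |u| - 1) (4 - 2 * |u|)) 1)

noncomputable def f2 (u : ℝ) : ℝ := f1 u + f1 (2 * u)

lemma f0_nonneg (u : ℝ) : 0 ≤ f0 u := le_min zero_le_one (le_max_right _ _)

lemma f0_le_one (u : ℝ) : f0 u ≤ 1 := min_le_left _ _

lemma f0_eq_one {u : ℝ} (h : 1 ≤ |u|) : f0 u = 1 :=
  min_eq_left (le_max_of_le_left (by linarith))

lemma f0_eq_zero {u : ℝ} (h : |u| < 1 / 2) : f0 u = 0 := by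
  have : max (2 * |u| - 1) 0 = 0 := max_eq_right (by linarith)
  rw [f0, this]
  exact min_eq_right zero_le_one

lemma f0_mono {u v : ℝ} (h : |u| ≤ |v|) : f0 u ≤ f0 v :=
  min_le_min le_rfl (max_le_max (by linarith) le_rfl)

lemma f0_continuous : Continuous f0 :=
  continuous_const.min (((continuous_const.mul continuous_abs).sub continuous_const).max
    continuous_const)

lemma isCcPos_nsmul_f0 (n : ℕ) : IsCcPos (fun u => (n : ℝ) * f0 u) := by
  refine ⟨continuous_const.mul f0_continuous, fun x => mul_nonneg (Nat.cast_nonneg n) (f0_nonneg x),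
    ⟨1/2, by norm_num, fun x hx => by show (n:ℝ) * f0 x = 0; rw [f0_eq_zero hx, mul_zero]⟩, ⟨(n : ℝ), ?_⟩, ⟨(n : ℝ), ?_⟩⟩
  · refine tendsto_const_nhds.congr' ?_
    filter_upwards [eventually_ge_atTop (1 : ℝ)] with b hb
    rw [f0_eq_one (le_trans hb (le_abs_self b)), mul_one]
  · refine tendsto_const_nhds.congr' ?_
    filter_upwards [eventually_le_atBot (-1 : ℝ)] with b hb
    rw [f0_eq_one (by rw [abs_of_nonpos (by linarith)]; linarith), mul_one]

lemma isCcPos_f0 : IsCcPos f0 := by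
  have := isCcPos_nsmul_f0 1
  simpa using this

lemma f1_nonneg (u : ℝ) : 0 ≤ f1 u := le_max_left _ _

lemma f1_le_one (u : ℝ) : f1 u ≤ 1 := max_le zero_le_one (min_le_right _ _)

lemma f1_eq_zero {u : ℝ} (h : |u| < 1 / 2) : f1 u = 0 := by
  refine max_eq_left ?_
  refine le_trans ((min_le_left _ _).trans (min_le_left _ _)) (by linarith)

lemma f1_eq_zero' {u : ℝ} (h : 2 ≤ |u|) : f1 u = 0 := by
  refine max_eq_left ?_
  refine le_trans ((min_le_left _ _).trans (min_le_right _ _)) (by linarith)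

lemma f1_continuous : Continuous f1 :=
  continuous_const.max ((((continuous_const.mul continuous_abs).sub continuous_const).min
    (continuous_const.sub (continuous_const.mul continuous_abs))).min continuous_const)

lemma isCcPos_f1 : IsCcPos f1 := by
  refine ⟨f1_continuous, f1_nonneg, ⟨1/2, by norm_num, fun x hx => f1_eq_zero hx⟩,
    ⟨0, ?_⟩, ⟨0, ?_⟩⟩
  · refine tendsto_const_nhds.congr' ?_
    filter_upwards [eventually_ge_atTop (2 : ℝ)] with b hb
    rw [f1_eq_zero' (le_trans hb (le_abs_self b))]
  · refine tendsto_const_nhds.congr' ?_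
    filter_upwards [eventually_le_atBot (-2 : ℝ)] with b hb
    rw [f1_eq_zero' (by rw [abs_of_nonpos (by linarith)]; linarith)]

lemma f2_nonneg (u : ℝ) : 0 ≤ f2 u := add_nonneg (f1_nonneg _) (f1_nonneg _)

lemma isCcPos_f2 : IsCcPos f2 := by
  refine ⟨f1_continuous.add (f1_continuous.comp (continuous_const.mul continuous_id)),
    f2_nonneg, ⟨1/4, by norm_num, fun x hx => ?_⟩, ⟨0, ?_⟩, ⟨0, ?_⟩⟩
  · have h1 : f1 x = 0 := f1_eq_zero (by linarith)
    have h2 : f1 (2 * x) = 0 := f1_eq_zero (by rw [abs_mul, abs_two]; linarith)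
    rw [f2, h1, h2, add_zero]
  · refine tendsto_const_nhds.congr' ?_
    filter_upwards [eventually_ge_atTop (2 : ℝ)] with b hb
    have hb' : (2:ℝ) ≤ |b| := le_trans hb (le_abs_self b)
    rw [f2, f1_eq_zero' hb', f1_eq_zero' (by rw [abs_mul]; norm_num; nlinarith), add_zero]
  · refine tendsto_const_nhds.congr' ?_
    filter_upwards [eventually_le_atBot (-2 : ℝ)] with b hb
    have hb' : (2:ℝ) ≤ |b| := by rw [abs_of_nonpos (by linarith)]; linarith
    rw [f2, f1_eq_zero' hb', f1_eq_zero' (by rw [abs_mul]; norm_num; nlinarith), add_zero]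

/-! ### Core lemmas on the scaled Laplace functional -/

section SLFLemmas

variable {Ω : Type*} [MeasurableSpace Ω] {μ : Measure Ω} [IsProbabilityMeasure μ]
  {N : Ω → Measure ℝ}

lemma measurable_lintA (hmN : Measurable N) {f : ℝ → ℝ} (hf : Measurable f) (y : ℝ) :
    Measurable fun ω => ∫⁻ x, ENNReal.ofReal (f (x / y)) ∂(N ω) :=
  (Measure.measurable_lintegral
    (ENNReal.measurable_ofReal.comp (hf.comp (measurable_id.div_const y)))).comp hmN

lemma integrable_expNeg_lintA (hmN : Measurable N) {f : ℝ → ℝ} (hf : Measurable f) (y : ℝ) :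
    Integrable (fun ω => expNeg (∫⁻ x, ENNReal.ofReal (f (x / y)) ∂(N ω))) μ := by
  refine (integrable_const (1 : ℝ)).mono'
    ((measurable_expNeg.comp (measurable_lintA hmN hf y)).aestronglyMeasurable) ?_
  filter_upwards with ω
  rw [Real.norm_eq_abs, abs_of_nonneg (expNeg_nonneg _)]
  exact expNeg_le_one _

lemma SLF_le_one (hmN : Measurable N) {f : ℝ → ℝ} (hf : Measurable f) (y : ℝ) :
    SLF μ N f y ≤ 1 := by
  rw [SLF]
  calc ∫ ω, expNeg (∫⁻ x, ENNReal.ofReal (f (x / y)) ∂(N ω)) ∂μ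
      ≤ ∫ _ω, (1 : ℝ) ∂μ :=
        integral_mono (integrable_expNeg_lintA hmN hf y) (integrable_const 1)
          fun ω => expNeg_le_one _
    _ = 1 := by simp

lemma SLF_eq_one_iff (hmN : Measurable N) {f : ℝ → ℝ} (hf : Measurable f) (y : ℝ) :
    SLF μ N f y = 1 ↔ ∀ᵐ ω ∂μ, (∫⁻ x, ENNReal.ofReal (f (x / y)) ∂(N ω)) = 0 := by
  constructor
  · intro h
    have hint := integrable_expNeg_lintA (μ := μ) hmN hf y
    have hsub : Integrable
        (fun ω => 1 - expNeg (∫⁻ x, ENNReal.ofReal (f (x / y)) ∂(N ω))) μ :=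
      (integrable_const 1).sub hint
    have hzero : ∫ ω, (1 - expNeg (∫⁻ x, ENNReal.ofReal (f (x / y)) ∂(N ω))) ∂μ = 0 := by
      rw [integral_sub (integrable_const 1) hint]
      simp only [integral_const, measureReal_def, measure_univ, ENNReal.toReal_one, smul_eq_mul, one_mul]
      rw [← SLF, h]; ring
    have hae := (integral_eq_zero_iff_of_nonneg
      (fun ω => sub_nonneg.2 (expNeg_le_one _)) hsub).1 hzero
    filter_upwards [hae] with ω hω
    have : expNeg (∫⁻ x, ENNReal.ofReal (f (x / y)) ∂(N ω)) = 1 := by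
      have := hω
      simp only [Pi.zero_apply] at this
      linarith [sub_eq_zero.1 this]
    exact expNeg_eq_one_iff.1 this
  · intro h
    rw [SLF]
    have : ∀ᵐ ω ∂μ, expNeg (∫⁻ x, ENNReal.ofReal (f (x / y)) ∂(N ω)) = 1 := by
      filter_upwards [h] with ω hω; rw [hω, expNeg_zero]
    rw [integral_congr_ae this]
    simp

lemma SLF_mono' (hmN : Measurable N) {f f' : ℝ → ℝ} (hf : Measurable f) (hf' : Measurable f')
    {y y' : ℝ} (h : ∀ x : ℝ, f' (x / y') ≤ f (x / y)) :
    SLF μ N f y ≤ SLF μ N f' y' := by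
  refine integral_mono (integrable_expNeg_lintA hmN hf y)
    (integrable_expNeg_lintA hmN hf' y') fun ω => ?_
  exact expNeg_anti (lintegral_mono fun x => ENNReal.ofReal_le_ofReal (h x))

/-- Upper bound for the integral by the tail mass, for `f ≤ 1` vanishing on `|u| < 1/2`. -/
lemma lintA_le_tail (ν : Measure ℝ) {f : ℝ → ℝ} (hf1 : ∀ u, f u ≤ 1)
    (hf0 : ∀ u : ℝ, |u| < 1 / 2 → f u = 0) {t : ℝ} (ht : 0 < t) :
    ∫⁻ x, ENNReal.ofReal (f (x / t)) ∂ν ≤ ν (Sb (t / 2)) := by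
  rw [← lintegral_indicator_one (measurableSet_Sb (t / 2))]
  refine lintegral_mono fun x => ?_
  by_cases hx : t / 2 ≤ |x|
  · have hxS : x ∈ Sb (t / 2) := hx
    rw [Set.indicator_of_mem hxS]
    exact ENNReal.ofReal_le_one.2 (hf1 _)
  · have : f (x / t) = 0 := by
      refine hf0 _ ?_
      rw [abs_div, abs_of_pos ht, div_lt_iff₀ ht]
      push_neg at hx
      linarith [hx]
    simp [this]

/-- Lower bound: `n * ν (Sb t) ≤ ∫ n f0(x/t) dν`. -/
lemma nsmul_tail_le_lintA (ν : Measure ℝ) (n : ℕ) {t : ℝ} (ht : 0 < t) :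
    (n : ℝ≥0∞) * ν (Sb t) ≤ ∫⁻ x, ENNReal.ofReal ((n : ℝ) * f0 (x / t)) ∂ν := by
  rw [← lintegral_indicator_const (measurableSet_Sb t) (n : ℝ≥0∞)]
  refine lintegral_mono fun x => ?_
  by_cases hx : x ∈ Sb t
  · rw [Set.indicator_of_mem hx]
    have h1 : f0 (x / t) = 1 := by
      refine f0_eq_one ?_
      rw [abs_div, abs_of_pos ht, le_div_iff₀ ht]
      simpa [one_mul, Sb] using hx
    rw [h1, mul_one, ENNReal.ofReal_natCast]
  · rw [Set.indicator_of_notMem hx]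
    exact zero_le

end SLFLemmas

/-- under `P(N(ℝ̄₀)=0) = 0` and a finite-mean condition, if the scaled Laplace
functional of `N` is scale-uniquely supported on `[g]_sc` with `g : (0,∞) → (0,∞)`, then
`inf g = 0`, `sup g = 1`, and `0 < g(x) < 1` for all `x > 0` (neither bound is attained). -/
theorem stmt5 {Ω : Type*} [MeasurableSpace Ω] (μ : Measure Ω) [IsProbabilityMeasure μ]
    (N : Ω → Measure ℝ) (hN : IsPointProcess μ N)
    (hzero : μ {ω | N ω Set.univ = 0} = 0)
    (hfin : ∃ a > 0, ∫⁻ ω, (N ω) {x : ℝ | a ≤ |x|} ∂μ < ∞)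
    (g : ℝ → ℝ) (hg : ∀ x > 0, 0 < g x)
    (hsupp : ScaleUniqSupp μ N g) :
    sInf (g '' Set.Ioi 0) = 0 ∧ sSup (g '' Set.Ioi 0) = 1 ∧
      ∀ x > 0, 0 < g x ∧ g x < 1 := by
  obtain ⟨hmN, hN0, hNfin, hNint⟩ := hN
  obtain ⟨a, ha, hfa⟩ := hfin
  have mf0 : Measurable f0 := f0_continuous.measurable
  have mf1 : Measurable f1 := f1_continuous.measurable
  have mf2 : Measurable f2 :=
    (f1_continuous.add (f1_continuous.comp (continuous_const.mul continuous_id))).measurable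
  obtain ⟨c₀, hc₀, hgc₀⟩ := hsupp f0 isCcPos_f0
  have g_eq : ∀ x : ℝ, 0 < x → g x = SLF μ N f0 (x / c₀) := by
    intro x hx
    have h := hgc₀ (x / c₀) (div_pos hx hc₀)
    rw [show c₀ * (x / c₀) = x by field_simp] at h
    exact h.symm
  have g_le_one : ∀ x : ℝ, 0 < x → g x ≤ 1 := by
    intro x hx
    rw [g_eq x hx]
    exact SLF_le_one hmN mf0 _
  have g_mono : ∀ s t : ℝ, 0 < s → s ≤ t → g s ≤ g t := by
    intro s t hs hst
    have ht : 0 < t := lt_of_lt_of_le hs hst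
    rw [g_eq s hs, g_eq t ht]
    refine SLF_mono' hmN mf0 mf0 fun x => ?_
    refine f0_mono ?_
    rw [abs_div, abs_of_pos (div_pos ht hc₀), abs_div, abs_of_pos (div_pos hs hc₀)]
    exact div_le_div_of_nonneg_left (abs_nonneg x) (div_pos hs hc₀)
      ((div_le_div_iff_of_pos_right hc₀).2 hst)
  have hne : (g '' Set.Ioi 0).Nonempty := ⟨g 1, 1, by norm_num, rfl⟩
  have hbddb : BddBelow (g '' Set.Ioi 0) := by
    refine ⟨0, ?_⟩
    rintro b ⟨x, hx, rfl⟩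
    exact (hg x hx).le
  have hbdda : BddAbove (g '' Set.Ioi 0) := by
    refine ⟨1, ?_⟩
    rintro b ⟨x, hx, rfl⟩
    exact g_le_one x hx
  -- tail events
  set E : ℝ → Set Ω := fun t => {ω | N ω (Sb t) = 0} with hEdef
  have measE : ∀ t, MeasurableSet (E t) :=
    fun t => ((Measure.measurable_coe (measurableSet_Sb t)).comp hmN) (measurableSet_singleton 0)
  have hNull : μ {ω | ¬ N ω {0} = 0} = 0 := ae_iff.1 hN0
  have hSbanti : ∀ s t : ℝ, s ≤ t → Sb t ⊆ Sb s := fun s t hst x hx => le_trans hst hx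
  have hEsmall : Tendsto (fun m : ℕ => μ (E (1 / ((m : ℝ) + 1)))) atTop (𝓝 0) := by
    have hanti : Antitone fun m : ℕ => E (1 / ((m : ℝ) + 1)) := by
      intro m m' hmm' ω hω
      simp only [hEdef, mem_setOf_eq] at hω ⊢
      refine measure_mono_null (hSbanti _ _ ?_) hω
      have h1 : (0:ℝ) < (m:ℝ) + 1 := by positivity
      have h2 : ((m:ℝ) + 1) ≤ ((m':ℝ) + 1) := by
        have : (m:ℝ) ≤ (m':ℝ) := by exact_mod_cast hmm'
        linarith
      exact one_div_le_one_div_of_le h1 h2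
    have hint0 : μ (⋂ m : ℕ, E (1 / ((m : ℝ) + 1))) = 0 := by
      have hsub : (⋂ m : ℕ, E (1 / ((m : ℝ) + 1))) ⊆
          {ω | N ω Set.univ = 0} ∪ {ω | ¬ N ω {0} = 0} := by
        intro ω hω
        by_cases h0 : N ω {0} = 0
        · left
          have hcov : (Set.univ : Set ℝ) ⊆ {0} ∪ ⋃ m : ℕ, Sb (1 / ((m : ℝ) + 1)) := by
            intro x _
            by_cases hx : x = 0
            · exact Or.inl (by simp [hx])
            · right
              have hax : 0 < |x| := abs_pos.2 hx
              obtain ⟨m, hm⟩ := exists_nat_gt (1 / |x|)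
              refine mem_iUnion.2 ⟨m, ?_⟩
              show 1 / ((m : ℝ) + 1) ≤ |x|
              rw [div_le_iff₀ (by positivity)]
              rw [div_lt_iff₀ hax] at hm
              nlinarith
          have := measure_mono hcov (μ := N ω)
          simp only [mem_setOf_eq]
          refine le_antisymm (le_trans this ?_) zero_le
          refine le_trans (measure_union_le _ _) ?_
          rw [h0, zero_add]
          refine le_trans (measure_iUnion_le _) ?_
          have hzm : ∀ m : ℕ, N ω (Sb (1 / ((m : ℝ) + 1))) = 0 := by
            intro m
            have := mem_iInter.1 hω m
            simpa [hEdef] using this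
          exact le_of_eq (ENNReal.tsum_eq_zero.2 hzm)
        · exact Or.inr h0
      refine le_antisymm (le_trans (measure_mono hsub) ?_) zero_le
      refine le_trans (measure_union_le _ _) ?_
      rw [hzero, hNull, add_zero]
    have := tendsto_measure_iInter_atTop
      (μ := μ) (s := fun m : ℕ => E (1 / ((m : ℝ) + 1)))
      (fun m => (measE _).nullMeasurableSet) hanti ⟨0, measure_ne_top μ _⟩
    rw [hint0] at this
    exact this
  -- Part 1 : sInf = 0
  have hinf : sInf (g '' Set.Ioi 0) = 0 := by
    have hub : ∀ ε : ℝ, 0 < ε → sInf (g '' Set.Ioi 0) ≤ ε := by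
      intro ε hε
      obtain ⟨n, hn⟩ : ∃ n : ℕ, Real.exp (-(n : ℝ)) < ε / 2 := by
        have h1 : Tendsto (fun n : ℕ => Real.exp (-(n : ℝ))) atTop (𝓝 0) :=
          Real.tendsto_exp_atBot.comp (tendsto_neg_atTop_atBot.comp tendsto_natCast_atTop_atTop)
        exact (h1.eventually_lt_const (by linarith)).exists
      obtain ⟨m, hm⟩ : ∃ m : ℕ, (μ (E (1 / ((m : ℝ) + 1)))).toReal < ε / 2 := by
        have h2 := hEsmall.eventually_lt_const (show (0:ℝ≥0∞) < ENNReal.ofReal (ε/2) by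
          simp [ENNReal.ofReal_pos]; linarith)
        obtain ⟨m, hm⟩ := h2.exists
        exact ⟨m, by
          rw [ENNReal.lt_ofReal_iff_toReal_lt (measure_ne_top μ _)] at hm
          exact hm⟩
      set y : ℝ := 1 / ((m : ℝ) + 1) with hy
      have hy0 : 0 < y := by positivity
      obtain ⟨c, hc, hgc⟩ := hsupp _ (isCcPos_nsmul_f0 n)
      have hkey : SLF μ N (fun u => (n : ℝ) * f0 u) y
          ≤ Real.exp (-(n : ℝ)) + (μ (E y)).toReal := by
        have hmf : Measurable fun u => (n : ℝ) * f0 u := measurable_const.mul mf0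
        have hFint := integrable_expNeg_lintA (μ := μ) hmN hmf y
        simp only [SLF]
        rw [← integral_add_compl (measE y) hFint]
        have h1 : ∫ ω in E y, expNeg (∫⁻ x, ENNReal.ofReal ((n:ℝ) * f0 (x / y)) ∂(N ω)) ∂μ
            ≤ (μ (E y)).toReal := by
          calc ∫ ω in E y, expNeg (∫⁻ x, ENNReal.ofReal ((n:ℝ) * f0 (x / y)) ∂(N ω)) ∂μ
              ≤ ∫ _ω in E y, (1:ℝ) ∂μ :=
                setIntegral_mono_on hFint.integrableOn (integrable_const 1).integrableOn
                  (measE y) (fun ω _ => expNeg_le_one _)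
            _ = (μ (E y)).toReal := by simp [measureReal_def]
        have h2 : ∫ ω in (E y)ᶜ, expNeg (∫⁻ x, ENNReal.ofReal ((n:ℝ) * f0 (x / y)) ∂(N ω)) ∂μ
            ≤ Real.exp (-(n : ℝ)) := by
          have hstep : ∫ ω in (E y)ᶜ,
              expNeg (∫⁻ x, ENNReal.ofReal ((n:ℝ) * f0 (x / y)) ∂(N ω)) ∂μ
              ≤ ∫ _ω in (E y)ᶜ, Real.exp (-(n : ℝ)) ∂μ := by
            refine setIntegral_mono_ae_restrict hFint.integrableOn
              (integrable_const _).integrableOn ?_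
            rw [EventuallyLE, ae_restrict_iff' (measE y).compl]
            filter_upwards [hNint] with ω hint hω
            have hωne : N ω (Sb y) ≠ 0 := hω
            have h1le : (1 : ℝ≥0∞) ≤ N ω (Sb y) := by
              rcases hint (Sb y) (measurableSet_Sb y) with ⟨k, hk⟩ | hinfty
              · rw [← hk]
                have hk0 : k ≠ 0 := by
                  rintro rfl
                  exact hωne (by simpa using hk.symm)
                exact_mod_cast Nat.one_le_iff_ne_zero.2 hk0
              · simp only [mem_singleton_iff] at hinfty
                rw [hinfty]; exact le_top
            have hAge : (n : ℝ≥0∞) ≤ ∫⁻ x, ENNReal.ofReal ((n:ℝ) * f0 (x / y)) ∂(N ω) := by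
              refine le_trans ?_ (nsmul_tail_le_lintA (N ω) n hy0)
              calc (n : ℝ≥0∞) = n * 1 := (mul_one _).symm
                _ ≤ n * N ω (Sb y) := mul_le_mul_right h1le _
            calc expNeg (∫⁻ x, ENNReal.ofReal ((n:ℝ) * f0 (x / y)) ∂(N ω))
                ≤ expNeg (n : ℝ≥0∞) := expNeg_anti hAge
              _ = Real.exp (-(n : ℝ)) := expNeg_natCast n
          refine le_trans hstep ?_
          rw [setIntegral_const, smul_eq_mul, measureReal_def]
          have hle1 : (μ ((E y)ᶜ)).toReal ≤ 1 := by
            have := prob_le_one (μ := μ) (s := (E y)ᶜ)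
            calc (μ ((E y)ᶜ)).toReal ≤ (1 : ℝ≥0∞).toReal :=
                ENNReal.toReal_mono (by simp) this
              _ = 1 := by simp
          have := Real.exp_pos (-(n:ℝ))
          nlinarith [ENNReal.toReal_nonneg (a := μ ((E y)ᶜ))]
        linarith
      have hmem : g (c * y) ∈ g '' Set.Ioi 0 := ⟨c * y, mul_pos hc hy0, rfl⟩
      calc sInf (g '' Set.Ioi 0) ≤ g (c * y) := csInf_le hbddb hmem
        _ = SLF μ N (fun u => (n : ℝ) * f0 u) y := (hgc y hy0).symm
        _ ≤ Real.exp (-(n : ℝ)) + (μ (E y)).toReal := hkey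
        _ ≤ ε := by linarith
    have hlb : 0 ≤ sInf (g '' Set.Ioi 0) :=
      le_csInf hne (by rintro b ⟨x, hx, rfl⟩; exact (hg x hx).le)
    by_contra hcon
    have hpos : 0 < sInf (g '' Set.Ioi 0) := lt_of_le_of_ne hlb (Ne.symm hcon)
    have := hub (sInf (g '' Set.Ioi 0) / 2) (by linarith)
    linarith
  -- Part 2 : sSup = 1
  have hsup : sSup (g '' Set.Ioi 0) = 1 := by
    refine le_antisymm (csSup_le hne (by rintro b ⟨x, hx, rfl⟩; exact g_le_one x hx)) ?_
    refine le_of_forall_pos_le_add fun ε hε => ?_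
    have htail : Tendsto (fun m : ℕ => ∫⁻ ω, N ω (Sb (a + (m:ℝ) + 1)) ∂μ) atTop (𝓝 0) := by
      have h0 := tendsto_lintegral_of_dominated_convergence (μ := μ)
        (F := fun m ω => N ω (Sb (a + (m:ℝ) + 1))) (f := fun _ => 0)
        (bound := fun ω => N ω (Sb a))
        (fun m => (Measure.measurable_coe (measurableSet_Sb _)).comp hmN)
        (fun m => ae_of_all _ fun ω => measure_mono (hSbanti _ _ (by
          push_cast; linarith [Nat.cast_nonneg (α := ℝ) m])))
        (by exact hfa.ne)
        ?_
      · simpa using h0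
      · filter_upwards [hNfin] with ω hfinω
        have h1 := tendsto_measure_iInter_atTop (μ := N ω)
          (s := fun m : ℕ => Sb (a + (m:ℝ) + 1))
          (fun m => (measurableSet_Sb _).nullMeasurableSet)
          (fun m m' hmm' => hSbanti _ _ (by
            have : (m:ℝ) ≤ (m':ℝ) := by exact_mod_cast hmm'
            linarith))
          ⟨0, by
            have h00 := (hfinω (a + ((0:ℕ):ℝ) + 1) (by push_cast; linarith)).ne
            exact h00⟩
        have h2 : (⋂ m : ℕ, Sb (a + (m:ℝ) + 1)) = ∅ := by
          ext x
          simp only [mem_iInter, mem_empty_iff_false, iff_false, not_forall]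
          obtain ⟨m, hm⟩ := exists_nat_gt (|x| - a - 1)
          exact ⟨m, by show ¬ (a + (m:ℝ) + 1 ≤ |x|); push_neg; linarith⟩
        rw [h2] at h1
        simpa [Function.comp_def] using h1
    obtain ⟨m, hm⟩ := (htail.eventually_lt_const
      (show (0:ℝ≥0∞) < ENNReal.ofReal ε from ENNReal.ofReal_pos.2 hε)).exists
    set t : ℝ := a + (m:ℝ) + 1 with htdef
    have ht : 0 < t := by positivity
    set y : ℝ := 2 * t with hydef
    have hy0 : 0 < y := by positivity
    have hlow : (μ (E t)).toReal ≤ SLF μ N f0 y := by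
      rw [SLF]
      have hptw : ∀ ω, (E t).indicator (fun _ => (1:ℝ)) ω
          ≤ expNeg (∫⁻ x, ENNReal.ofReal (f0 (x / y)) ∂(N ω)) := by
        intro ω
        by_cases hω : ω ∈ E t
        · rw [Set.indicator_of_mem hω]
          have h0 : (∫⁻ x, ENNReal.ofReal (f0 (x / y)) ∂(N ω)) = 0 := by
            have hb := lintA_le_tail (N ω) f0_le_one (fun u hu => f0_eq_zero hu) hy0
            rw [show y / 2 = t by rw [hydef]; ring] at hb
            have hω' : N ω (Sb t) = 0 := hω
            exact le_antisymm (hb.trans hω'.le) zero_le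
          rw [h0, expNeg_zero]
        · rw [Set.indicator_of_notMem hω]
          exact expNeg_nonneg _
      calc (μ (E t)).toReal = ∫ ω, (E t).indicator (fun _ => (1:ℝ)) ω ∂μ := by
            rw [integral_indicator_const (1:ℝ) (measE t)]; simp [measureReal_def]
        _ ≤ _ := integral_mono ((integrable_const 1).indicator (measE t))
            (integrable_expNeg_lintA hmN mf0 y) hptw
    have hcompl : μ ((E t)ᶜ) ≤ ∫⁻ ω, N ω (Sb t) ∂μ := by
      have hsub2 : (E t)ᶜ ⊆ {ω | 1 ≤ N ω (Sb t)} ∪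
          {ω | ¬ ∀ B : Set ℝ, MeasurableSet B →
            (N ω) B ∈ Set.range ((↑) : ℕ → ℝ≥0∞) ∪ {∞}} := by
        intro ω hω
        by_cases hint : ∀ B : Set ℝ, MeasurableSet B →
            (N ω) B ∈ Set.range ((↑) : ℕ → ℝ≥0∞) ∪ {∞}
        · left
          have hωne : N ω (Sb t) ≠ 0 := hω
          rcases hint (Sb t) (measurableSet_Sb t) with ⟨k, hk⟩ | hinfty
          · rw [mem_setOf_eq, ← hk]
            have hk0 : k ≠ 0 := by
              rintro rfl
              exact hωne (by simpa using hk.symm)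
            exact_mod_cast Nat.one_le_iff_ne_zero.2 hk0
          · simp only [mem_singleton_iff] at hinfty
            rw [mem_setOf_eq, hinfty]; exact le_top
        · exact Or.inr hint
      calc μ ((E t)ᶜ) ≤ μ ({ω | 1 ≤ N ω (Sb t)} ∪ _) := measure_mono hsub2
        _ ≤ μ {ω | 1 ≤ N ω (Sb t)} + μ {ω | ¬ ∀ B : Set ℝ, MeasurableSet B →
            (N ω) B ∈ Set.range ((↑) : ℕ → ℝ≥0∞) ∪ {∞}} := measure_union_le _ _
        _ = μ {ω | 1 ≤ N ω (Sb t)} := by rw [ae_iff.1 hNint, add_zero]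
        _ ≤ ∫⁻ ω, N ω (Sb t) ∂μ := by
            simpa using mul_meas_ge_le_lintegral₀
              ((Measure.measurable_coe (measurableSet_Sb t)).comp hmN).aemeasurable 1
    have h1 : (μ (E t)).toReal + (μ ((E t)ᶜ)).toReal = 1 := by
      rw [← ENNReal.toReal_add (measure_ne_top μ _) (measure_ne_top μ _),
        measure_add_measure_compl (measE t)]
      simp
    have h3 : (μ ((E t)ᶜ)).toReal ≤ ε := by
      have h4 : μ ((E t)ᶜ) ≤ ENNReal.ofReal ε := hcompl.trans hm.le
      calc (μ ((E t)ᶜ)).toReal ≤ (ENNReal.ofReal ε).toReal :=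
          ENNReal.toReal_mono (by simp) h4
        _ = ε := ENNReal.toReal_ofReal hε.le
    have hmem : g (c₀ * y) ∈ g '' Set.Ioi 0 := ⟨c₀ * y, mul_pos hc₀ hy0, rfl⟩
    have hval : 1 - ε ≤ g (c₀ * y) := by
      rw [← hgc₀ y hy0]
      linarith
    linarith [le_csSup hbdda hmem]
  -- Part 3 : g < 1 everywhere
  have hlt : ∀ x : ℝ, 0 < x → g x < 1 := by
    by_contra hcon
    push_neg at hcon
    obtain ⟨x₀, hx₀, hx₀1⟩ := hcon
    have hgx₀ : g x₀ = 1 := le_antisymm (g_le_one _ hx₀) hx₀1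
    obtain ⟨t₀, ht₀, hgt₀⟩ : ∃ t₀, 0 < t₀ ∧ g t₀ < 1 := by
      by_contra h
      push_neg at h
      have h1 : (1:ℝ) ≤ sInf (g '' Set.Ioi 0) :=
        le_csInf hne (by rintro b ⟨x, hx, rfl⟩; exact h x hx)
      rw [hinf] at h1
      linarith
    obtain ⟨c₁, hc₁, hgc₁⟩ := hsupp f1 isCcPos_f1
    obtain ⟨c₂, hc₂, hgc₂⟩ := hsupp f2 isCcPos_f2
    set A : ℝ → Ω → ℝ≥0∞ := fun y ω => ∫⁻ x, ENNReal.ofReal (f1 (x / y)) ∂(N ω) with hAdef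
    have hsplit : ∀ y : ℝ, 0 < y → ∀ ω,
        (∫⁻ x, ENNReal.ofReal (f2 (x / y)) ∂(N ω)) = A y ω + A (y / 2) ω := by
      intro y hy ω
      simp only [hAdef]
      have h_meas : Measurable fun x : ℝ => ENNReal.ofReal (f1 (x / y)) :=
        (mf1.comp (measurable_id.div_const y)).ennreal_ofReal
      rw [← lintegral_add_left h_meas]
      refine lintegral_congr fun x => ?_
      have h2 : (2:ℝ) * (x / y) = x / (y / 2) := by
        field_simp
      rw [show f2 (x / y) = f1 (x / y) + f1 (2 * (x / y)) from rfl, h2]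
      exact ENNReal.ofReal_add (f1_nonneg _) (f1_nonneg _)
    have hSLF2 : ∀ y : ℝ, 0 < y →
        SLF μ N f2 y = ∫ ω, expNeg (A y ω + A (y / 2) ω) ∂μ := by
      intro y hy
      rw [SLF]
      exact integral_congr_ae (ae_of_all _ fun ω => by simp only [hsplit y hy ω])
    set Sset : Set ℝ := {x | 0 < x ∧ g x = 1} with hSsetdef
    have hSne : Sset.Nonempty := ⟨x₀, hx₀, hgx₀⟩
    have hSlb : ∀ s ∈ Sset, t₀ ≤ s := by
      rintro s ⟨hs, hgs⟩
      by_contra hlt'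
      push_neg at hlt'
      have h5 := g_mono s t₀ hs hlt'.le
      rw [hgs] at h5
      linarith
    set T := sInf Sset with hTdef
    have hbddS : BddBelow Sset := ⟨t₀, hSlb⟩
    have hTpos : 0 < T := lt_of_lt_of_le ht₀ (le_csInf hSne hSlb)
    have hTH1 : ∀ t : ℝ, T < t → g t = 1 := by
      intro t ht
      obtain ⟨s, hsS, hst⟩ := exists_lt_of_csInf_lt hSne ht
      have htpos : 0 < t := lt_trans hsS.1 hst
      exact le_antisymm (g_le_one t htpos) (hsS.2 ▸ g_mono s t hsS.1 hst.le)
    have hTH2 : ∀ t : ℝ, 0 < t → t < T → g t < 1 := by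
      intro t htpos ht
      rcases lt_or_eq_of_le (g_le_one t htpos) with h | h
      · exact h
      · exact absurd (csInf_le hbddS ⟨htpos, h⟩) (not_le.2 ht)
    have hiff1 : ∀ y : ℝ, (SLF μ N f1 y = 1 ↔ ∀ᵐ ω ∂μ, A y ω = 0) :=
      fun y => SLF_eq_one_iff hmN mf1 y
    have hiff2 : ∀ y : ℝ, 0 < y →
        (SLF μ N f2 y = 1 ↔ ∀ᵐ ω ∂μ, A y ω = 0 ∧ A (y / 2) ω = 0) := by
      intro y hy
      rw [SLF_eq_one_iff hmN mf2 y]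
      constructor
      · intro h
        filter_upwards [h] with ω hω
        rw [hsplit y hy ω] at hω
        exact add_eq_zero.1 hω
      · intro h
        filter_upwards [h] with ω hω
        rw [hsplit y hy ω, hω.1, hω.2, add_zero]
    have hpin : c₂ = c₁ / 2 := by
      rcases lt_trichotomy c₂ (c₁ / 2) with hlt' | heq | hgt'
      · exfalso
        obtain ⟨y, hy1, hy2⟩ := exists_between (show 2 * T / c₁ < T / c₂ by
          rw [div_lt_div_iff₀ (by linarith) hc₂]
          nlinarith)
        have hy0 : 0 < y := lt_trans (by positivity) hy1
        have h1 : g (c₁ * y) = 1 := by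
          refine hTH1 _ ?_
          rw [div_lt_iff₀ (by linarith)] at hy1
          nlinarith
        have h2 : g (c₁ * (y / 2)) = 1 := by
          refine hTH1 _ ?_
          rw [div_lt_iff₀ (by linarith)] at hy1
          nlinarith
        have e1 : ∀ᵐ ω ∂μ, A y ω = 0 := (hiff1 y).1 (by rw [hgc₁ y hy0]; exact h1)
        have e2 : ∀ᵐ ω ∂μ, A (y / 2) ω = 0 :=
          (hiff1 (y / 2)).1 (by rw [hgc₁ (y / 2) (by positivity)]; exact h2)
        have e3 : SLF μ N f2 y = 1 :=
          (hiff2 y hy0).2 (by filter_upwards [e1, e2] with ω hω1 hω2; exact ⟨hω1, hω2⟩)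
        rw [hgc₂ y hy0] at e3
        have hTle : T ≤ c₂ * y := csInf_le hbddS ⟨mul_pos hc₂ hy0, e3⟩
        rw [lt_div_iff₀ hc₂] at hy2
        linarith
      · exact heq
      · exfalso
        obtain ⟨y, hy1, hy2⟩ := exists_between (show T / c₂ < 2 * T / c₁ by
          rw [div_lt_div_iff₀ hc₂ (by linarith)]
          nlinarith)
        have hy0 : 0 < y := lt_trans (by positivity) hy1
        have h1 : g (c₂ * y) = 1 := by
          refine hTH1 _ ?_
          rw [div_lt_iff₀ hc₂] at hy1
          linarith
        have e3 : SLF μ N f2 y = 1 := by rw [hgc₂ y hy0]; exact h1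
        have ha2 := (hiff2 y hy0).1 e3
        have e2 : SLF μ N f1 (y / 2) = 1 :=
          (hiff1 (y / 2)).2 (by filter_upwards [ha2] with ω hω; exact hω.2)
        rw [hgc₁ (y / 2) (by positivity)] at e2
        have hlt2 : c₁ * (y / 2) < T := by
          rw [lt_div_iff₀ (by linarith)] at hy2
          nlinarith
        exact absurd e2 (ne_of_lt (hTH2 _ (by positivity) hlt2))
    have hfinal : ∀ y : ℝ, 0 < y → ∀ᵐ ω ∂μ, A y ω = 0 := by
      intro y hy
      have heqv : SLF μ N f2 y = SLF μ N f1 (y / 2) := by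
        rw [hgc₂ y hy, hgc₁ (y / 2) (by positivity), hpin]
        ring_nf
      have hle : ∀ ω, expNeg (A y ω + A (y / 2) ω) ≤ expNeg (A (y / 2) ω) :=
        fun ω => expNeg_anti le_add_self
      have hint2 : Integrable (fun ω => expNeg (A y ω + A (y / 2) ω)) μ := by
        refine (integrable_expNeg_lintA (μ := μ) hmN mf2 y).congr
          (ae_of_all _ fun ω => by simp only [hsplit y hy ω])
      have hint1 : Integrable (fun ω => expNeg (A (y / 2) ω)) μ :=
        integrable_expNeg_lintA hmN mf1 (y / 2)
      have hzero2 : ∫ ω, (expNeg (A (y / 2) ω) - expNeg (A y ω + A (y / 2) ω)) ∂μ = 0 := by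
        rw [integral_sub hint1 hint2]
        have hl : ∫ ω, expNeg (A y ω + A (y / 2) ω) ∂μ = SLF μ N f2 y := (hSLF2 y hy).symm
        have hr : ∫ ω, expNeg (A (y / 2) ω) ∂μ = SLF μ N f1 (y / 2) := rfl
        rw [hl, hr, heqv]
        ring
      have hae := (integral_eq_zero_iff_of_nonneg
        (fun ω => sub_nonneg.2 (hle ω)) (hint1.sub hint2)).1 hzero2
      filter_upwards [hae, hNfin] with ω hω1 hω2
      have heqexp : expNeg (A y ω + A (y / 2) ω) = expNeg (A (y / 2) ω) := by
        have := hω1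
        simp only [Pi.zero_apply] at this
        linarith [sub_eq_zero.1 this]
      have hfin' : A (y / 2) ω ≠ ∞ := by
        refine ne_of_lt (lt_of_le_of_lt
          (lintA_le_tail (N ω) f1_le_one (fun u hu => f1_eq_zero hu) (by positivity)) ?_)
        exact hω2 (y / 2 / 2) (by positivity)
      exact expNeg_add_right_cancel hfin' heqexp
    have hone : SLF μ N f1 (t₀ / c₁) = 1 :=
      (hiff1 _).2 (hfinal _ (by positivity))
    rw [hgc₁ _ (div_pos ht₀ hc₁), show c₁ * (t₀ / c₁) = t₀ by field_simp] at hone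
    exact absurd hone (ne_of_lt hgt₀)
  exact ⟨hinf, hsup, fun x hx => ⟨hg x hx, hlt x hx⟩⟩
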